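/- If every player i satisfies L_i > θ_i + Σ_{j ∈ N⁻(i)} ξ_{ji}, then the Shapley value of the interdependent security cost-sharing game allocates to player i exactly Φ_i = θ_i + Σ_{j ∈ N⁻(i)} ξ_{ji}/2 − Σ_{j ∈ N⁺(i)} ξ_{ij}/2. -/

import Mathlib

open Finset

/-- In-neighbors of `i`: players `j` with an arc `(j, i)`. -/
def inN {V : Type*} [Fintype V] (A : V → V → Prop) [DecidableRel A] (i : V) : Finset V :=
  Finset.univ.filter fun j => A j i

/-- Out-neighbors of `i`: players `j` with an arc `(i, j)`. -/
def outN {V : Type*} [Fintype V] (A : V → V → Prop) [DecidableRel A] (i : V) : Finset V :=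
  Finset.univ.filter fun j => A i j

/-- Cost of coalition `S` when exactly `W ⊆ S` is secured. -/
noncomputable def coalCost {V : Type*} [Fintype V] [DecidableEq V]
    (A : V → V → Prop) [DecidableRel A] (θ L : V → ℝ) (ξ : V → V → ℝ)
    (S W : Finset V) : ℝ :=
  ∑ i ∈ W, (θ i + ∑ j ∈ inN A i \ W, ξ j i) + ∑ i ∈ S \ W, L i

/-- Coalition-optimal security cost `c(S) = min_{W ⊆ S} coalCost S W`. -/
noncomputable def cCoal {V : Type*} [Fintype V] [DecidableEq V]
    (A : V → V → Prop) [DecidableRel A] (θ L : V → ℝ) (ξ : V → V → ℝ)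
    (S : Finset V) : ℝ :=
  (S.powerset.image (coalCost A θ L ξ S)).min'
    (Finset.Nonempty.image ⟨∅, Finset.empty_mem_powerset S⟩ _)

/-- The Shapley value of player `i` in the cost game `(N, c)`:
`Φ_i = Σ_{S ∋ i} ((|S|−1)!(n−|S|)!/n!) (c(S) − c(S \ {i}))`. -/
noncomputable def shapley {V : Type*} [Fintype V] [DecidableEq V]
    (c : Finset V → ℝ) (i : V) : ℝ :=
  ∑ S ∈ Finset.univ.powerset.filter (fun S => i ∈ S),
    (((S.card - 1).factorial : ℝ) * ((Fintype.card V - S.card).factorial : ℝ) /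
        ((Fintype.card V).factorial : ℝ)) * (c S - c (S.erase i))

/-! ### Auxiliary material -/

/-- The Shapley weight `(s-1)!(n-s)!/n!`. -/
noncomputable def shW (n s : ℕ) : ℝ :=
  ((s - 1).factorial : ℝ) * ((n - s).factorial : ℝ) / (n.factorial : ℝ)

lemma sum_shW_one {V : Type*} [Fintype V] [DecidableEq V] (i : V) :
    ∑ S ∈ univ.powerset.filter (fun S => i ∈ S), shW (Fintype.card V) S.card = 1 := by
  have hne : Nonempty V := ⟨i⟩
  have hn : 1 ≤ Fintype.card V := Fintype.card_pos
  set n := Fintype.card V with hndef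
  have h1 : ∑ S ∈ univ.powerset.filter (fun S => i ∈ S), shW n S.card
      = ∑ T ∈ (univ.erase i).powerset, shW n (T.card + 1) := by
    apply Finset.sum_nbij' (fun S => S.erase i) (fun T => insert i T)
    · intro S hS
      simp only [mem_filter, mem_powerset] at hS ⊢
      exact erase_subset_erase i (subset_univ S)
    · intro T hT
      simp only [mem_powerset] at hT
      simp only [mem_filter, mem_powerset]
      exact ⟨subset_univ _, mem_insert_self i T⟩
    · intro S hS
      simp only [mem_filter] at hS
      exact insert_erase hS.2
    · intro T hT
      simp only [mem_powerset] at hT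
      exact erase_insert (fun hi => (mem_erase.1 (hT hi)).1 rfl)
    · intro S hS
      simp only [mem_filter] at hS
      have hc : 1 ≤ S.card := card_pos.2 ⟨i, hS.2⟩
      rw [card_erase_of_mem hS.2]
      congr 1
      omega
  rw [h1, Finset.sum_powerset_apply_card (fun m => shW n (m + 1))]
  rw [card_erase_of_mem (mem_univ i), card_univ, ← hndef]
  have hterm : ∀ m ∈ range ((n - 1) + 1),
      (n - 1).choose m • shW n (m + 1) = 1 / (n : ℝ) := by
    intro m hm
    rw [mem_range] at hm
    have hmn : m ≤ n - 1 := by omega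
    have hfac : (n - 1).choose m * m.factorial * (n - 1 - m).factorial
        = (n - 1).factorial := Nat.choose_mul_factorial_mul_factorial hmn
    have hnn : n.factorial = n * (n - 1).factorial := by
      conv_lhs => rw [show n = (n - 1) + 1 by omega]
      rw [Nat.factorial_succ]
      congr 1
      omega
    unfold shW
    rw [nsmul_eq_mul]
    have h2 : m + 1 - 1 = m := by omega
    have h3 : n - (m + 1) = n - 1 - m := by omega
    rw [h2, h3]
    have hnf : (n.factorial : ℝ) ≠ 0 := Nat.cast_ne_zero.2 (Nat.factorial_ne_zero n)
    have hn0 : (n : ℝ) ≠ 0 := Nat.cast_ne_zero.2 (by omega)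
    rw [mul_div_assoc'] at *
    rw [div_eq_div_iff hnf hn0]
    push_cast [← hfac, hnn]
    ring
  rw [Finset.sum_congr rfl hterm, Finset.sum_const, card_range]
  rw [nsmul_eq_mul]
  have : ((n - 1 : ℕ) + 1 : ℕ) = n := by omega
  rw [this]
  field_simp

lemma shW_flip {n s : ℕ} (h1 : 1 ≤ s) (h2 : s ≤ n) : shW n (n - s + 1) = shW n s := by
  unfold shW
  have e1 : n - s + 1 - 1 = n - s := by omega
  have e2 : n - (n - s + 1) = s - 1 := by omega
  rw [e1, e2, mul_comm]

lemma sum_shW_pair_eq {V : Type*} [Fintype V] [DecidableEq V] {i j : V} (hji : j ≠ i) :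
    ∑ S ∈ (univ.powerset.filter (fun S => i ∈ S)).filter (fun S => j ∉ S),
        shW (Fintype.card V) S.card
    = ∑ S ∈ (univ.powerset.filter (fun S => i ∈ S)).filter (fun S => j ∈ S),
        shW (Fintype.card V) S.card := by
  apply Finset.sum_nbij' (fun S => insert i Sᶜ) (fun S => insert i Sᶜ)
  · intro S hS
    simp only [mem_filter, mem_powerset] at hS ⊢
    refine ⟨⟨subset_univ _, mem_insert_self i _⟩, ?_⟩
    exact mem_insert_of_mem (mem_compl.2 hS.2)
  · intro S hS
    simp only [mem_filter, mem_powerset] at hS ⊢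
    refine ⟨⟨subset_univ _, mem_insert_self i _⟩, ?_⟩
    simp [hji, hS.2]
  · intro S hS
    simp only [mem_filter] at hS
    rw [compl_insert, compl_compl, insert_erase hS.1.2]
  · intro S hS
    simp only [mem_filter] at hS
    rw [compl_insert, compl_compl, insert_erase hS.1.2]
  · intro S hS
    simp only [mem_filter] at hS
    have hs1 : 1 ≤ S.card := card_pos.2 ⟨i, hS.1.2⟩
    have hsn : S.card ≤ Fintype.card V := by
      simpa using card_le_card (subset_univ S)
    have hci : i ∉ Sᶜ := by simp [hS.1.2]
    rw [card_insert_of_notMem hci, card_compl, shW_flip hs1 hsn]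

lemma sum_shW_notmem {V : Type*} [Fintype V] [DecidableEq V] {i j : V} (hji : j ≠ i) :
    ∑ S ∈ (univ.powerset.filter (fun S => i ∈ S)).filter (fun S => j ∉ S),
        shW (Fintype.card V) S.card = 1 / 2 := by
  have h1 := sum_shW_pair_eq (V := V) hji
  have h2 := Finset.sum_filter_add_sum_filter_not
    (univ.powerset.filter (fun S => i ∈ S)) (fun S => j ∈ S)
    (fun S => shW (Fintype.card V) S.card)
  rw [sum_shW_one i] at h2
  linarith

lemma sum_shW_mem {V : Type*} [Fintype V] [DecidableEq V] {i j : V} (hji : j ≠ i) :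
    ∑ S ∈ (univ.powerset.filter (fun S => i ∈ S)).filter (fun S => j ∈ S),
        shW (Fintype.card V) S.card = 1 / 2 := by
  have h1 := sum_shW_pair_eq (V := V) hji
  have h2 := sum_shW_notmem (V := V) hji
  linarith

lemma cCoal_eq {V : Type*} [Fintype V] [DecidableEq V]
    (A : V → V → Prop) [DecidableRel A] (θ L : V → ℝ) (ξ : V → V → ℝ)
    (hξ : ∀ i j, 0 ≤ ξ i j)
    (hbig : ∀ i, θ i + ∑ j ∈ inN A i, ξ j i < L i) (S : Finset V) :
    cCoal A θ L ξ S = ∑ k ∈ S, (θ k + ∑ j ∈ inN A k \ S, ξ j k) := by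
  apply le_antisymm
  · apply min'_le
    refine mem_image.2 ⟨S, mem_powerset_self S, ?_⟩
    simp [coalCost]
  · apply le_min'
    intro y hy
    obtain ⟨W, hW, rfl⟩ := mem_image.1 hy
    rw [mem_powerset] at hW
    unfold coalCost
    rw [← Finset.sum_sdiff hW]
    have h1 : ∑ k ∈ W, (θ k + ∑ j ∈ inN A k \ S, ξ j k)
        ≤ ∑ k ∈ W, (θ k + ∑ j ∈ inN A k \ W, ξ j k) := by
      apply sum_le_sum
      intro k _
      apply add_le_add_right
      apply sum_le_sum_of_subset_of_nonneg
      · exact sdiff_subset_sdiff (le_refl _) hW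
      · intro j _ _; exact hξ j k
    have h2 : ∑ k ∈ S \ W, (θ k + ∑ j ∈ inN A k \ S, ξ j k) ≤ ∑ k ∈ S \ W, L k := by
      apply sum_le_sum
      intro k _
      refine le_of_lt (lt_of_le_of_lt ?_ (hbig k))
      apply add_le_add_right
      apply sum_le_sum_of_subset_of_nonneg sdiff_subset
      intro j _ _; exact hξ j k
    linarith

lemma marginal_eq {V : Type*} [Fintype V] [DecidableEq V]
    (A : V → V → Prop) [DecidableRel A] (θ : V → ℝ) (ξ : V → V → ℝ)
    {S : Finset V} {i : V} (hiS : i ∈ S) :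
    (∑ k ∈ S, (θ k + ∑ j ∈ inN A k \ S, ξ j k))
      - (∑ k ∈ S.erase i, (θ k + ∑ j ∈ inN A k \ S.erase i, ξ j k))
    = θ i + ∑ j ∈ inN A i \ S, ξ j i
      - ∑ k ∈ (S.erase i).filter (fun k => A i k), ξ i k := by
  have hsum : ∀ k ∈ S.erase i,
      (θ k + ∑ j ∈ inN A k \ S.erase i, ξ j k)
      = (θ k + ∑ j ∈ inN A k \ S, ξ j k) + (if A i k then ξ i k else 0) := by
    intro k hk
    have hset : inN A k \ S.erase i
        = (inN A k \ S) ∪ (inN A k).filter (fun j => j = i) := by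
      ext j
      simp only [mem_sdiff, mem_erase, mem_union, mem_filter]
      by_cases hji : j = i
      · subst hji; simp [hiS]
      · simp [hji]
    have hdisj : Disjoint (inN A k \ S) ((inN A k).filter (fun j => j = i)) := by
      rw [disjoint_right]
      intro j hj
      rw [mem_filter] at hj
      rw [hj.2]
      simp [hiS]
    rw [hset, sum_union hdisj, sum_filter,
      Finset.sum_ite_eq' (inN A k) i (fun j => ξ j k)]
    have hmem : (if i ∈ inN A k then ξ i k else 0) = (if A i k then ξ i k else 0) := by
      simp [inN]
    rw [hmem]
    ring
  rw [← Finset.add_sum_erase S _ hiS, Finset.sum_congr rfl hsum]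
  simp only [Finset.sum_add_distrib]
  rw [← Finset.sum_filter]
  ring

theorem shapley_large_penalties {V : Type*} [Fintype V] [DecidableEq V]
    (A : V → V → Prop) [DecidableRel A] (θ L : V → ℝ) (ξ : V → V → ℝ)
    (hθ : ∀ i, 0 ≤ θ i) (hL : ∀ i, 0 ≤ L i) (hξ : ∀ i j, 0 ≤ ξ i j)
    (hbig : ∀ i, θ i + ∑ j ∈ inN A i, ξ j i < L i) (i : V) :
    shapley (cCoal A θ L ξ) i =
      θ i + (∑ j ∈ inN A i, ξ j i) / 2 - (∑ j ∈ outN A i, ξ i j) / 2 := by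
  classical
  have hc := cCoal_eq A θ L ξ hξ hbig
  have hmarg : ∀ S ∈ univ.powerset.filter (fun S => i ∈ S),
      cCoal A θ L ξ S - cCoal A θ L ξ (S.erase i)
      = θ i + ∑ j ∈ inN A i \ S, ξ j i
        - ∑ k ∈ (S.erase i).filter (fun k => A i k), ξ i k := by
    intro S hS
    rw [mem_filter] at hS
    rw [hc, hc]
    exact marginal_eq A θ ξ hS.2
  have hshap : shapley (cCoal A θ L ξ) i
      = ∑ S ∈ univ.powerset.filter (fun S => i ∈ S),
          shW (Fintype.card V) S.card
            * (cCoal A θ L ξ S - cCoal A θ L ξ (S.erase i)) := rfl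
  rw [hshap]
  have step1 : ∑ S ∈ univ.powerset.filter (fun S => i ∈ S),
      shW (Fintype.card V) S.card
        * (cCoal A θ L ξ S - cCoal A θ L ξ (S.erase i))
    = ∑ S ∈ univ.powerset.filter (fun S => i ∈ S),
        (shW (Fintype.card V) S.card * θ i
          + ∑ j ∈ inN A i, (if j ∉ S then shW (Fintype.card V) S.card * ξ j i else 0)
          - ∑ k ∈ outN A i, (if k ∈ S.erase i then shW (Fintype.card V) S.card * ξ i k else 0)) := by
    apply sum_congr rfl
    intro S hS
    rw [hmarg S hS]
    have e1 : ∑ j ∈ inN A i \ S, ξ j i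
        = ∑ j ∈ inN A i, (if j ∉ S then ξ j i else 0) := by
      rw [← Finset.sum_filter, sdiff_eq_filter]
    have e2 : ∑ k ∈ (S.erase i).filter (fun k => A i k), ξ i k
        = ∑ k ∈ outN A i, (if k ∈ S.erase i then ξ i k else 0) := by
      rw [← Finset.sum_filter]
      apply Finset.sum_congr _ (fun _ _ => rfl)
      ext k
      simp only [mem_filter, outN, mem_univ, true_and, mem_erase]
      tauto
    rw [e1, e2, mul_sub, mul_add, Finset.mul_sum, Finset.mul_sum]
    simp only [mul_ite, mul_zero]
  rw [step1, Finset.sum_sub_distrib, Finset.sum_add_distrib, ← Finset.sum_mul,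
    sum_shW_one i, one_mul]
  have hB : ∑ S ∈ univ.powerset.filter (fun S => i ∈ S),
      ∑ j ∈ inN A i, (if j ∉ S then shW (Fintype.card V) S.card * ξ j i else 0)
    = ∑ j ∈ inN A i, (if j = i then 0 else (1/2 : ℝ)) * ξ j i := by
    rw [Finset.sum_comm]
    apply sum_congr rfl
    intro j _
    by_cases hji : j = i
    · subst hji
      rw [if_pos rfl, zero_mul]
      apply Finset.sum_eq_zero
      intro S hS
      rw [mem_filter] at hS
      rw [if_neg (not_not_intro hS.2)]
    · rw [if_neg hji, ← Finset.sum_filter, ← Finset.sum_mul, sum_shW_notmem hji]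
  have hC : ∑ S ∈ univ.powerset.filter (fun S => i ∈ S),
      ∑ k ∈ outN A i, (if k ∈ S.erase i then shW (Fintype.card V) S.card * ξ i k else 0)
    = ∑ k ∈ outN A i, (if k = i then 0 else (1/2 : ℝ)) * ξ i k := by
    rw [Finset.sum_comm]
    apply sum_congr rfl
    intro k _
    by_cases hki : k = i
    · subst hki
      rw [if_pos rfl, zero_mul]
      apply Finset.sum_eq_zero
      intro S _
      rw [if_neg (fun h => (mem_erase.1 h).1 rfl)]
    · rw [if_neg hki]
      have hcong : ∀ S ∈ univ.powerset.filter (fun S => i ∈ S),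
          (if k ∈ S.erase i then shW (Fintype.card V) S.card * ξ i k else 0)
          = (if k ∈ S then shW (Fintype.card V) S.card * ξ i k else 0) := by
        intro S _
        simp [Finset.mem_erase, hki]
      rw [Finset.sum_congr rfl hcong, ← Finset.sum_filter, ← Finset.sum_mul,
        sum_shW_mem hki]
  rw [hB, hC]
  have key : ∀ (t : Finset V) (f : V → ℝ),
      ∑ j ∈ t, (if j = i then 0 else (1/2 : ℝ)) * f j
      = (∑ j ∈ t, f j) / 2 - (if i ∈ t then f i / 2 else 0) := by
    intro t f
    by_cases hit : i ∈ t
    · rw [if_pos hit, ← Finset.add_sum_erase t _ hit, ← Finset.add_sum_erase t f hit]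
      have h2 : ∑ j ∈ t.erase i, (if j = i then 0 else (1/2 : ℝ)) * f j
          = (∑ j ∈ t.erase i, f j) / 2 := by
        rw [Finset.sum_div]
        apply sum_congr rfl
        intro j hj
        rw [if_neg (mem_erase.1 hj).1]
        ring
      rw [h2, if_pos rfl]
      ring
    · rw [if_neg hit, sub_zero, Finset.sum_div]
      apply sum_congr rfl
      intro j hj
      have hji : j ≠ i := fun h => hit (h ▸ hj)
      rw [if_neg hji]
      ring
  rw [key, key]
  have h1 : i ∈ inN A i ↔ A i i := by simp [inN]
  have h2 : i ∈ outN A i ↔ A i i := by simp [outN]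
  by_cases hA : A i i
  · rw [if_pos (h1.2 hA), if_pos (h2.2 hA)]
    ring
  · rw [if_neg (fun h => hA (h1.1 h)), if_neg (fun h => hA (h2.1 h))]
    ring
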